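/- Let h(x) = Σ_{i=1}^n h_i(x_i) with each h_i : ℝ → ℝ being L_i-smooth (h_i(x) ≤ h_i(y) + h_i'(y)(x−y) + (L_i/2)(x−y)²). Let x* minimize h over C = {x : Σ_i x_i = 0}. Then for every x ∈ C, ‖G_{[n]} ∇h(x)‖²_L ≤ (2 L_max / L_min) (h(x) − h(x*)), where ‖v‖²_L = vᵀ L v, L = diag(L_1,…,L_n), L_max = max_i L_i, L_min = min_i L_i. -/

import Mathlib

open Matrix BigOperators Finset

/-- Gradient upper bound: for separable h with L_i-smooth components and x* the
minimizer over C = {x : ∑ x i = 0}, every feasible x satisfies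
`‖G_{[n]} ∇h(x)‖²_L ≤ (2 L_max / L_min)(h(x) − h(x*))`. -/
theorem stmt10 {n : ℕ} (L : Fin n → ℝ) (Lmin Lmax : ℝ) (hLmin : 0 < Lmin)
    (h1 : ∀ i, Lmin ≤ L i) (h2 : ∀ i, L i ≤ Lmax)
    (h : Fin n → ℝ → ℝ) (g : Fin n → ℝ → ℝ)
    (hderiv : ∀ i x, HasDerivAt (h i) (g i x) x)
    (hsmooth : ∀ i x y, h i x ≤ h i y + g i y * (x - y) + L i / 2 * (x - y) ^ 2)
    (xstar : Fin n → ℝ) (hfeas : ∑ i, xstar i = 0)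
    (hopt : ∀ z : Fin n → ℝ, (∑ i, z i = 0) → (∑ i, h i (xstar i)) ≤ ∑ i, h i (z i))
    (x : Fin n → ℝ) (hx : ∑ i, x i = 0) :
    let c : ℝ := ∑ i, (L i)⁻¹
    let G : Matrix (Fin n) (Fin n) ℝ :=
      Matrix.diagonal (fun i => (L i)⁻¹) -
        c⁻¹ • Matrix.vecMulVec (fun i => (L i)⁻¹) (fun i => (L i)⁻¹)
    let quadL : (Fin n → ℝ) → ℝ := fun w => w ⬝ᵥ (Matrix.diagonal L *ᵥ w)
    quadL (G *ᵥ fun j => g j (x j))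
      ≤ 2 * Lmax / Lmin * ((∑ i, h i (x i)) - ∑ i, h i (xstar i)) := by
  intro c G quadL
  rcases Nat.eq_zero_or_pos n with hn | hn
  · subst hn
    simp [quadL, dotProduct]
  haveI : Nonempty (Fin n) := ⟨⟨0, hn⟩⟩
  have hLpos : ∀ i, 0 < L i := fun i => hLmin.trans_le (h1 i)
  have hLne : ∀ i, L i ≠ 0 := fun i => (hLpos i).ne'
  have hc : 0 < c := Finset.sum_pos (fun i _ => inv_pos.mpr (hLpos i)) univ_nonempty
  set v : Fin n → ℝ := fun j => g j (x j) with hv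
  set μ : ℝ := c⁻¹ * ∑ j, (L j)⁻¹ * v j with hμ
  have hGv : ∀ i, (G *ᵥ v) i = (v i - μ) / L i := by
    intro i
    have e1 : (G *ᵥ v) i
        = (L i)⁻¹ * v i - c⁻¹ * ((L i)⁻¹ * ∑ j, (L j)⁻¹ * v j) := by
      simp only [G, Matrix.sub_mulVec, Matrix.smul_mulVec, Pi.sub_apply, Pi.smul_apply,
        Matrix.mulVec_diagonal, smul_eq_mul]
      congr 1
      simp only [Matrix.mulVec, Matrix.vecMulVec_apply, dotProduct, Finset.mul_sum]
      congr 1; ext j; ring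
    rw [e1, hμ]
    have hL := hLne i
    field_simp
  set Q : ℝ := ∑ i, (v i - μ) ^ 2 / L i with hQdef
  have hquad : quadL (G *ᵥ v) = Q := by
    simp only [quadL, dotProduct, Matrix.mulVec_diagonal, hQdef]
    refine Finset.sum_congr rfl fun i _ => ?_
    rw [hGv i]
    have hL := hLne i
    field_simp
  have hsum0 : ∑ i, (v i - μ) / L i = 0 := by
    have : ∑ i, (v i - μ) / L i = (∑ j, (L j)⁻¹ * v j) - μ * c := by
      rw [Finset.mul_sum, ← Finset.sum_sub_distrib]
      refine Finset.sum_congr rfl fun i _ => ?_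
      field_simp
    rw [this, hμ]
    field_simp
    ring
  set z : Fin n → ℝ := fun i => x i - (v i - μ) / L i with hzdef
  have hz : ∑ i, z i = 0 := by
    simp only [hzdef]
    rw [Finset.sum_sub_distrib, hx, hsum0, sub_zero]
  have hstep : ∑ i, h i (z i) ≤ (∑ i, h i (x i)) - Q / 2 := by
    have h1' : ∑ i, h i (z i) ≤
        ∑ i, (h i (x i) + v i * (z i - x i) + L i / 2 * (z i - x i) ^ 2) :=
      Finset.sum_le_sum fun i _ => hsmooth i (z i) (x i)
    have h2' : ∑ i, (h i (x i) + v i * (z i - x i) + L i / 2 * (z i - x i) ^ 2)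
        = (∑ i, h i (x i)) + (∑ i, (-( (v i - μ) ^ 2 / L i) / 2 - μ * ((v i - μ) / L i))) := by
      rw [← Finset.sum_add_distrib]
      refine Finset.sum_congr rfl fun i _ => ?_
      simp only [hzdef]
      have hL := hLne i
      field_simp
      ring
    rw [h2'] at h1'
    have h3' : ∑ i, (-((v i - μ) ^ 2 / L i) / 2 - μ * ((v i - μ) / L i))
        = -(Q / 2) := by
      rw [Finset.sum_sub_distrib, ← Finset.mul_sum, hsum0, mul_zero, sub_zero, hQdef,
        ← Finset.sum_div]
      simp [neg_div, Finset.sum_neg_distrib]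
    rw [h3'] at h1'
    linarith
  have hΔ : 0 ≤ (∑ i, h i (x i)) - ∑ i, h i (xstar i) := by
    have := hopt x hx; linarith
  have hQle : Q ≤ 2 * ((∑ i, h i (x i)) - ∑ i, h i (xstar i)) := by
    have := hopt z hz; linarith
  have hratio : (2 : ℝ) ≤ 2 * Lmax / Lmin := by
    have : Lmin ≤ Lmax := (h1 (Classical.arbitrary _)).trans (h2 _)
    rw [le_div_iff₀ hLmin]
    nlinarith
  calc quadL (G *ᵥ v) = Q := hquad
    _ ≤ 2 * ((∑ i, h i (x i)) - ∑ i, h i (xstar i)) := hQle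
    _ ≤ 2 * Lmax / Lmin * ((∑ i, h i (x i)) - ∑ i, h i (xstar i)) :=
        mul_le_mul_of_nonneg_right hratio hΔ
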